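/- For every n ≥ 1 and every ultrafilter F on ℕ: L_n ∈ F if and only if there exists a pattern α with σ(α) = n such that F_α ⊆ F. -/

import Mathlib

open scoped Classical

/-- The set of primes, as a subset of the positive integers. -/
def primes : Set ℕ+ := {p | (p : ℕ).Prime}

/-- A pattern assigns a multiplicity in `ω` to each pair `(P, k)` of an ultrafilter
on `ℕ` and an exponent `k`, with finite support. -/
abbrev Pat : Type := ((Ultrafilter ℕ+) × ℕ) →₀ ℕ

/-- A pattern is only supported on pairs `(P, k)` where `ℙ ∈ P` and `k ≥ 1`. -/
def IsPattern (α : Pat) : Prop :=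
  ∀ Pk ∈ α.support, primes ∈ Pk.1 ∧ 0 < Pk.2

/-- `σ(α) = Σ k·α(P,k)`. -/
def sigmaPat (α : Pat) : ℕ := ∑ Pk ∈ α.support, Pk.2 * α Pk

/-- Given a pattern `α` and a choice `A` of a set of primes for each ultrafilter,
the set `{∏_i ∏_j p_{i,j}^{k_i} : p_{i,j} ∈ A(P_i) pairwise distinct}`. -/
def patBaseSet (α : Pat) (A : Ultrafilter ℕ+ → Set ℕ+) : Set ℕ+ :=
  { x | ∃ p : (Pk : (Ultrafilter ℕ+) × ℕ) → Fin (α Pk) → ℕ+,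
      (∀ Pk j, p Pk j ∈ A Pk.1) ∧
      Function.Injective (fun q : Σ Pk : (Ultrafilter ℕ+) × ℕ, Fin (α Pk) => p q.1 q.2) ∧
      x = ∏ Pk ∈ α.support, ∏ j : Fin (α Pk), (p Pk j) ^ Pk.2 }

/-- The family `F_α`: all sets obtained from choices of sets `A(P) ∈ P`, `A(P) ⊆ ℙ`,
with `A(P) ∩ A(P') = ∅` for distinct `P, P'` occurring in the support of `α`. -/
def FamF (α : Pat) : Set (Set ℕ+) :=
  { S | ∃ A : Ultrafilter ℕ+ → Set ℕ+,
      (∀ Pk ∈ α.support, A Pk.1 ∈ Pk.1 ∧ A Pk.1 ⊆ primes) ∧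
      (∀ Pk ∈ α.support, ∀ Pk' ∈ α.support, Pk.1 ≠ Pk'.1 → A Pk.1 ∩ A Pk'.1 = ∅) ∧
      S = patBaseSet α A }

/-- `L_n`: the positive integers which are products of exactly `n` primes
(counted with multiplicity). -/
def levelSet (n : ℕ) : Set ℕ+ :=
  { x | ∃ l : List ℕ+, l.length = n ∧ (∀ p ∈ l, (p : ℕ).Prime) ∧ l.prod = x }

lemma one_mem_levelSet : (1 : ℕ+) ∈ levelSet 0 := ⟨[], rfl, by simp, rfl⟩

lemma mul_mem_levelSet {x y : ℕ+} {a b : ℕ} (hx : x ∈ levelSet a) (hy : y ∈ levelSet b) :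
    x * y ∈ levelSet (a + b) := by
  obtain ⟨l, hl, hlp, hle⟩ := hx
  obtain ⟨m, hm, hmp, hme⟩ := hy
  refine ⟨l ++ m, by simp [hl, hm], ?_, by simp [hle, hme]⟩
  intro p hp
  rcases List.mem_append.1 hp with h | h
  exacts [hlp p h, hmp p h]

lemma pow_mem_levelSet {p : ℕ+} (hp : (p : ℕ).Prime) (k : ℕ) : p ^ k ∈ levelSet k :=
  ⟨List.replicate k p, by simp, by intro q hq; rw [List.eq_of_mem_replicate hq]; exact hp,
    by simp⟩

lemma prod_mem_levelSet {ι : Type*} (s : Finset ι) (f : ι → ℕ+) (g : ι → ℕ)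
    (h : ∀ i ∈ s, f i ∈ levelSet (g i)) : (∏ i ∈ s, f i) ∈ levelSet (∑ i ∈ s, g i) := by
  induction s using Finset.cons_induction with
  | empty => simpa using one_mem_levelSet
  | cons a s ha ih =>
    rw [Finset.prod_cons, Finset.sum_cons]
    exact mul_mem_levelSet (h a (Finset.mem_cons_self a s))
      (ih fun i hi => h i (Finset.mem_cons_of_mem hi))

lemma pnat_coe_list_prod (l : List ℕ+) :
    ((l.prod : ℕ+) : ℕ) = (l.map (fun p : ℕ+ => (p : ℕ))).prod := by
  induction l with
  | nil => simp
  | cons a l ih => simp [ih]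

lemma mem_levelSet_iff {x : ℕ+} {n : ℕ} :
    x ∈ levelSet n ↔ (x : ℕ).primeFactorsList.length = n := by
  constructor
  · rintro ⟨l, hl, hlp, rfl⟩
    have h1 : (l.map (fun p : ℕ+ => (p : ℕ))).prod = ((l.prod : ℕ+) : ℕ) :=
      (pnat_coe_list_prod l).symm
    have := Nat.primeFactorsList_unique h1 (by
      intro p hp
      obtain ⟨q, hq, rfl⟩ := List.mem_map.1 hp
      exact hlp q hq)
    rw [← hl, ← List.length_map (as := l) (fun p : ℕ+ => (p : ℕ))]
    exact this.length_eq.symm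
  · intro h
    refine ⟨((x : ℕ).primeFactorsList).pmap (fun p hp => (⟨p, hp⟩ : ℕ+))
      (fun p hp => (Nat.prime_of_mem_primeFactorsList hp).pos), List.length_pmap.trans h, ?_, ?_⟩
    · intro p hp
      obtain ⟨q, hq, rfl⟩ := List.mem_pmap.1 hp
      exact Nat.prime_of_mem_primeFactorsList hq
    · apply PNat.coe_injective
      have : ∀ (L : List ℕ) (hL : ∀ p ∈ L, 0 < p),
          (((L.pmap (fun p hp => (⟨p, hp⟩ : ℕ+)) hL).prod : ℕ+) : ℕ) = L.prod := by
        intro L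
        induction L with
        | nil => intro _; simp
        | cons a L ih => intro hL; simp [ih]
      exact (this _ _).trans (Nat.prod_primeFactorsList x.ne_zero)

lemma levelSet_unique {x : ℕ+} {n m : ℕ} (hn : x ∈ levelSet n) (hm : x ∈ levelSet m) : n = m := by
  rw [mem_levelSet_iff] at hn hm; omega

lemma ultrafilter_sep {X : Type*} {P Q : Ultrafilter X} (h : P ≠ Q) :
    ∃ s : Set X, s ∈ P ∧ s ∉ Q := by
  by_contra hc
  push_neg at hc
  have hle : (Q : Filter X) ≤ (P : Filter X) := fun s hs => hc s hs
  exact h (Ultrafilter.coe_le_coe.1 hle).symm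

/-- For a finite set of ultrafilters each containing `prm`, there is a choice of
pairwise disjoint member sets inside `prm`. -/
lemma disjoint_family {X : Type*} (prm : Set X) (Q : Finset (Ultrafilter X))
    (hQ : ∀ P ∈ Q, prm ∈ P) :
    ∃ A : Ultrafilter X → Set X,
      (∀ P ∈ Q, A P ∈ P ∧ A P ⊆ prm) ∧
      (∀ P ∈ Q, ∀ P' ∈ Q, P ≠ P' → A P ∩ A P' = ∅) := by
  have hD : ∀ P P' : Ultrafilter X, ∃ s : Set X, P ≠ P' → s ∈ P ∧ s ∉ P' := by
    intro P P'
    by_cases h : P = P'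
    · exact ⟨Set.univ, fun hne => absurd h hne⟩
    · obtain ⟨s, hs⟩ := ultrafilter_sep h
      exact ⟨s, fun _ => hs⟩
  choose D hD using hD
  refine ⟨fun P => prm ∩ ⋂ P' ∈ Q.erase P, (D P P' ∩ (D P' P)ᶜ), ?_, ?_⟩
  · intro P hP
    refine ⟨?_, Set.inter_subset_left⟩
    refine Filter.inter_mem (hQ P hP) ?_
    refine (Filter.biInter_finset_mem _).2 fun P' hP' => ?_
    have hne : P ≠ P' := (Finset.ne_of_mem_erase hP').symm
    exact Filter.inter_mem ((hD P P' hne).1)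
      ((Ultrafilter.compl_mem_iff_notMem).2 ((hD P' P hne.symm).2))
  · intro P hP P' hP' hne
    apply Set.eq_empty_iff_forall_notMem.2
    rintro x ⟨⟨-, hx2⟩, -, hx'2⟩
    rw [Set.mem_iInter₂] at hx2 hx'2
    exact (hx'2 P (Finset.mem_erase.2 ⟨hne, hP⟩)).2
      ((hx2 P' (Finset.mem_erase.2 ⟨hne.symm, hP'⟩)).1)

lemma list_prod_fin {M : Type*} [CommMonoid M] (l : List ℕ) (hl : l.Nodup) {r : ℕ}
    (h : l.length = r) (f : ℕ → M) :
    ∏ i : Fin r, f (l.getD i 1) = ∏ p ∈ l.toFinset, f p := by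
  subst h
  rw [List.prod_toFinset f hl, ← List.ofFn_getElem_eq_map l f, List.prod_ofFn]
  refine Finset.prod_congr rfl fun i _ => ?_
  rw [List.getD_eq_getElem l 1 i.isLt]

lemma getD_inj {l : List ℕ} (hs : l.Pairwise (· < ·)) {r : ℕ} (h : l.length = r)
    {i j : Fin r} (hij : l.getD i 1 = l.getD j 1) : i = j := by
  subst h
  rw [List.getD_eq_getElem l 1 i.isLt, List.getD_eq_getElem l 1 j.isLt] at hij
  exact (List.Pairwise.sortedLT hs).strictMono_get.injective hij

lemma pnat_coe_prod {ι : Type*} (s : Finset ι) (f : ι → ℕ+) :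
    ((∏ i ∈ s, f i : ℕ+) : ℕ) = ∏ i ∈ s, (f i : ℕ) := by
  induction s using Finset.cons_induction with
  | empty => simp
  | cons a s ha ih => rw [Finset.prod_cons, Finset.prod_cons, PNat.mul_coe, ih]

lemma forward (n : ℕ) (F : Ultrafilter ℕ+) (h : levelSet n ∈ F) :
    ∃ α : Pat, IsPattern α ∧ sigmaPat α = n ∧ ∀ S ∈ FamF α, S ∈ F := by
  classical
  set pl : ℕ+ → List ℕ := fun x => Finset.sort (x : ℕ).primeFactors (· ≤ ·) with hpl
  set tf : ℕ+ → ℕ := fun x => min (x : ℕ).primeFactors.card n with htf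
  have htmem : Set.Iic n ∈ Ultrafilter.map tf F := by
    rw [Ultrafilter.mem_map]
    refine Filter.univ_mem' fun x => ?_
    simp only [Set.mem_preimage, htf, Set.mem_Iic]
    exact min_le_right _ _
  obtain ⟨r, -, hc₀⟩ := Ultrafilter.eq_pure_of_finite_mem (Set.finite_Iic n) htmem
  have hB1 : tf ⁻¹' {r} ∈ F := by
    have h1 : ({r} : Set ℕ) ∈ (pure r : Ultrafilter ℕ) := rfl
    rw [← hc₀, Ultrafilter.mem_map] at h1
    exact h1
  set ef : ℕ+ → (Fin r → ℕ) := fun x i => min ((x : ℕ).factorization ((pl x).getD i 1)) n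
    with hef
  have hemem : {f : Fin r → ℕ | ∀ i, f i ≤ n} ∈ Ultrafilter.map ef F := by
    rw [Ultrafilter.mem_map]
    exact Filter.univ_mem' fun x i => min_le_right _ _
  have hfinpi : {f : Fin r → ℕ | ∀ i, f i ≤ n}.Finite := by
    refine (Set.Finite.pi (fun _ : Fin r => Set.finite_Iic n)).subset ?_
    intro f hf
    exact Set.mem_pi.2 fun i _ => hf i
  obtain ⟨c, -, hc⟩ := Ultrafilter.eq_pure_of_finite_mem hfinpi hemem
  have hB2 : ef ⁻¹' {c} ∈ F := by
    have h1 : ({c} : Set (Fin r → ℕ)) ∈ (pure c : Ultrafilter (Fin r → ℕ)) := rfl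
    rw [← hc, Ultrafilter.mem_map] at h1
    exact h1
  set B : Set ℕ+ := levelSet n ∩ tf ⁻¹' {r} ∩ ef ⁻¹' {c} with hBdef
  have hB : B ∈ F := Filter.inter_mem (Filter.inter_mem h hB1) hB2
  -- basic facts on B
  have hcard : ∀ x ∈ B, (x : ℕ).primeFactors.card = r := by
    rintro x ⟨⟨hxL, hxr⟩, -⟩
    have hlen : (x : ℕ).primeFactorsList.length = n := mem_levelSet_iff.1 hxL
    have hle : (x : ℕ).primeFactors.card ≤ n := hlen ▸ List.toFinset_card_le _
    have h2 : min (x : ℕ).primeFactors.card n = r := hxr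
    rwa [min_eq_left hle] at h2
  have hlen : ∀ x ∈ B, (pl x).length = r := by
    intro x hx
    rw [hpl]
    simpa [Finset.length_sort] using hcard x hx
  set qf : ℕ+ → Fin r → ℕ+ :=
    fun x i => ⟨max ((pl x).getD i 1) 1, lt_of_lt_of_le zero_lt_one (le_max_right _ _)⟩
    with hqf
  have hgetmem : ∀ x ∈ B, ∀ i : Fin r, (pl x).getD i 1 ∈ (x : ℕ).primeFactors := by
    intro x hx i
    have hi : (i : ℕ) < (pl x).length := (hlen x hx) ▸ i.isLt
    rw [List.getD_eq_getElem _ 1 hi]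
    exact (Finset.mem_sort (α := ℕ) (· ≤ ·)).1 (List.getElem_mem hi)
  have hqcoe : ∀ x ∈ B, ∀ i : Fin r, ((qf x i : ℕ)) = (pl x).getD i 1 := by
    intro x hx i
    have hp := Nat.prime_of_mem_primeFactors (hgetmem x hx i)
    rw [hqf]
    exact max_eq_left hp.one_lt.le
  have hqprime : ∀ x ∈ B, ∀ i : Fin r, ((qf x i : ℕ)).Prime := by
    intro x hx i
    rw [hqcoe x hx i]
    exact Nat.prime_of_mem_primeFactors (hgetmem x hx i)
  have hfact : ∀ x ∈ B, ∀ i : Fin r, (x : ℕ).factorization ((pl x).getD i 1) = c i := by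
    rintro x hx i
    obtain ⟨⟨hxL, -⟩, hxe⟩ := hx
    have hlenn : (x : ℕ).primeFactorsList.length = n := mem_levelSet_iff.1 hxL
    have hle : (x : ℕ).factorization ((pl x).getD i 1) ≤ n := by
      rw [← Nat.primeFactorsList_count_eq, ← hlenn]
      exact List.count_le_length
    have h2 : min ((x : ℕ).factorization ((pl x).getD i 1)) n = c i := congrFun hxe i
    rwa [min_eq_left hle] at h2
  have hqinj : ∀ x ∈ B, Function.Injective (qf x) := by
    intro x hx i j hij
    have : (pl x).getD i 1 = (pl x).getD j 1 := by
      rw [← hqcoe x hx i, ← hqcoe x hx j, hij]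
    exact getD_inj (by rw [hpl]; exact (Finset.sortedLT_sort _).pairwise) (hlen x hx) this
  have hprod : ∀ x ∈ B, x = ∏ i : Fin r, (qf x i) ^ (c i) := by
    intro x hx
    apply PNat.coe_injective
    rw [pnat_coe_prod]
    have h1 : ∀ i : Fin r, ((qf x i ^ c i : ℕ+) : ℕ) = ((pl x).getD i 1) ^ (c i) := by
      intro i
      rw [PNat.pow_coe, hqcoe x hx i]
    rw [Finset.prod_congr rfl fun i _ => h1 i]
    have h2 : ∀ i : Fin r, ((pl x).getD i 1) ^ (c i)
        = ((pl x).getD i 1) ^ ((x : ℕ).factorization ((pl x).getD i 1)) := by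
      intro i
      rw [hfact x hx i]
    rw [Finset.prod_congr rfl fun i _ => h2 i]
    have h3 := list_prod_fin (pl x) (by rw [hpl]; exact Finset.sort_nodup _ _) (hlen x hx)
      (fun p => p ^ (x : ℕ).factorization p)
    rw [h3]
    have h4 : (pl x).toFinset = (x : ℕ).primeFactors := by
      rw [hpl]; exact Finset.sort_toFinset _ _
    rw [h4, ← Nat.prod_factorization_eq_prod_primeFactors (fun p k => p ^ k),
      Nat.factorization_prod_pow_eq_self x.ne_zero]
  -- the ultrafilters and the pattern
  set P : Fin r → Ultrafilter ℕ+ := fun i => Ultrafilter.map (fun x => qf x i) F with hP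
  set α : Pat := ∑ i : Fin r, Finsupp.single (P i, c i) 1 with hαdef
  have hα : ∀ Pk, α Pk = (Finset.filter (fun i : Fin r => (P i, c i) = Pk) Finset.univ).card := by
    intro Pk
    rw [hαdef, Finsupp.finset_sum_apply, Finset.card_filter]
    exact Finset.sum_congr rfl fun i _ => Finsupp.single_apply
  have hsupp : ∀ i : Fin r, (P i, c i) ∈ α.support := by
    intro i
    rw [Finsupp.mem_support_iff, hα]
    exact Finset.card_ne_zero_of_mem (Finset.mem_filter.2 ⟨Finset.mem_univ i, rfl⟩)
  obtain ⟨x₀, hx₀⟩ := Ultrafilter.nonempty_of_mem hB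
  have hsum : ∑ i : Fin r, c i = n := by
    have h1 : x₀ ∈ levelSet (∑ i : Fin r, c i) := by
      rw [hprod x₀ hx₀]
      exact prod_mem_levelSet Finset.univ _ _ fun i _ => pow_mem_levelSet (hqprime x₀ hx₀ i) _
    exact levelSet_unique h1 hx₀.1.1
  have hprimesP : ∀ i : Fin r, primes ∈ P i := by
    intro i
    rw [hP, Ultrafilter.mem_map]
    exact Filter.mem_of_superset hB fun x hx => hqprime x hx i
  refine ⟨α, ?_, ?_, ?_⟩
  · -- IsPattern
    intro Pk hPk
    rw [Finsupp.mem_support_iff, hα] at hPk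
    obtain ⟨i, hi⟩ := Finset.card_pos.1 (Nat.pos_of_ne_zero hPk)
    have hieq : (P i, c i) = Pk := (Finset.mem_filter.1 hi).2
    rw [← hieq]
    refine ⟨hprimesP i, ?_⟩
    have h1 : (x₀ : ℕ).factorization ((pl x₀).getD i 1) ≠ 0 := by
      have := hgetmem x₀ hx₀ i
      rw [← Nat.support_factorization, Finsupp.mem_support_iff] at this
      exact this
    rw [← hfact x₀ hx₀ i] at *
    exact Nat.pos_of_ne_zero h1
  · -- sigma
    rw [sigmaPat]
    calc ∑ Pk ∈ α.support, Pk.2 * α Pk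
        = ∑ Pk ∈ α.support,
            ∑ i ∈ Finset.filter (fun i : Fin r => (P i, c i) = Pk) Finset.univ, c i := by
          refine Finset.sum_congr rfl fun Pk _ => ?_
          have hcc : ∀ i ∈ Finset.filter (fun i : Fin r => (P i, c i) = Pk) Finset.univ,
              c i = Pk.2 := fun i hi => congrArg Prod.snd (Finset.mem_filter.1 hi).2
          rw [Finset.sum_congr rfl hcc, Finset.sum_const, smul_eq_mul, hα, mul_comm]
      _ = ∑ i : Fin r, c i := Finset.sum_fiberwise_of_maps_to (fun i _ => hsupp i) c
      _ = n := hsum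
  · -- FamF
    rintro S ⟨A, hA1, -, rfl⟩
    have hCmem : ∀ i : Fin r, (fun x => qf x i) ⁻¹' (A (P i)) ∈ F := by
      intro i
      have h1 := (hA1 (P i, c i) (hsupp i)).1
      rw [hP] at h1 ⊢
      rw [Ultrafilter.mem_map] at h1
      exact h1
    have hCF : B ∩ ⋂ i : Fin r, (fun x => qf x i) ⁻¹' (A (P i)) ∈ F :=
      Filter.inter_mem hB (Filter.iInter_mem.2 hCmem)
    refine Filter.mem_of_superset hCF ?_
    rintro x ⟨hxB, hxA⟩
    rw [Set.mem_iInter] at hxA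
    set T : (Ultrafilter ℕ+ × ℕ) → Finset (Fin r) :=
      fun Pk => Finset.filter (fun i : Fin r => (P i, c i) = Pk) Finset.univ with hT
    set E : (Pk : Ultrafilter ℕ+ × ℕ) → Fin (α Pk) → {i // i ∈ T Pk} :=
      fun Pk => (Finset.equivFinOfCardEq (hα Pk).symm).symm with hE
    have hEmem : ∀ Pk j, (P ((E Pk j) : Fin r), c ((E Pk j) : Fin r)) = Pk :=
      fun Pk j => (Finset.mem_filter.1 (E Pk j).2).2
    refine ⟨fun Pk j => qf x (E Pk j), ?_, ?_, ?_⟩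
    · intro Pk j
      have h1 : A Pk.1 = A (P ((E Pk j) : Fin r)) :=
        (congrArg (fun z : Ultrafilter ℕ+ × ℕ => A z.1) (hEmem Pk j)).symm
      rw [h1]
      exact hxA ((E Pk j) : Fin r)
    · rintro ⟨Pk, j⟩ ⟨Pk', j'⟩ hpe
      simp only at hpe
      have hii : ((E Pk j) : Fin r) = ((E Pk' j') : Fin r) := hqinj x hxB hpe
      have h1 : Pk = Pk' := by rw [← hEmem Pk j, ← hEmem Pk' j', hii]
      subst h1
      have h2 : E Pk j = E Pk j' := Subtype.ext hii
      have h3 : j = j' := (Finset.equivFinOfCardEq (hα Pk).symm).symm.injective h2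
      subst h3
      rfl
    · refine (hprod x hxB).trans ?_
      have h2 : ∀ Pk ∈ α.support,
          (∏ j : Fin (α Pk), (qf x ((E Pk j) : Fin r)) ^ Pk.2)
            = ∏ i ∈ T Pk, (qf x i) ^ (c i) := by
        intro Pk _
        rw [← Finset.prod_coe_sort (T Pk) (fun i => (qf x i) ^ (c i))]
        rw [← Equiv.prod_comp (Finset.equivFinOfCardEq (hα Pk).symm).symm
          (fun t : {i // i ∈ T Pk} => (qf x (t : Fin r)) ^ (c (t : Fin r)))]
        refine Finset.prod_congr rfl fun j _ => ?_
        have h3 : c ((E Pk j) : Fin r) = Pk.2 := congrArg Prod.snd (hEmem Pk j)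
        rw [← h3]
      calc ∏ i : Fin r, (qf x i) ^ (c i)
          = ∏ Pk ∈ α.support, ∏ i ∈ T Pk, (qf x i) ^ (c i) :=
            (Finset.prod_fiberwise_of_maps_to (fun i _ => hsupp i) _).symm
        _ = ∏ Pk ∈ α.support, ∏ j : Fin (α Pk), (qf x ((E Pk j) : Fin r)) ^ Pk.2 :=
            Finset.prod_congr rfl fun Pk hPk => (h2 Pk hPk).symm

theorem stmt6 (n : ℕ) (hn : 1 ≤ n) (F : Ultrafilter ℕ+) :
    levelSet n ∈ F ↔
      ∃ α : Pat, IsPattern α ∧ sigmaPat α = n ∧ ∀ S ∈ FamF α, S ∈ F := by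
  constructor
  · intro h
    exact forward n F h
  · rintro ⟨α, hpat, hσ, hF⟩
    obtain ⟨A, hA1, hA2⟩ := disjoint_family primes (α.support.image Prod.fst)
      (by
        intro P hP
        obtain ⟨Pk, hPk, rfl⟩ := Finset.mem_image.1 hP
        exact (hpat Pk hPk).1)
    have hS : patBaseSet α A ∈ F := by
      apply hF
      refine ⟨A, fun Pk hPk => hA1 _ (Finset.mem_image_of_mem _ hPk), ?_, rfl⟩
      intro Pk hPk Pk' hPk' hne
      exact hA2 _ (Finset.mem_image_of_mem _ hPk) _ (Finset.mem_image_of_mem _ hPk') hne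
    refine F.toFilter.mem_of_superset hS ?_
    rintro x ⟨p, hmem, hinj, rfl⟩
    have : ∀ Pk ∈ α.support, (∏ j : Fin (α Pk), (p Pk j) ^ Pk.2) ∈ levelSet (Pk.2 * α Pk) := by
      intro Pk hPk
      have h1 : ∀ j : Fin (α Pk), (p Pk j) ^ Pk.2 ∈ levelSet Pk.2 := fun j =>
        pow_mem_levelSet ((hA1 _ (Finset.mem_image_of_mem _ hPk)).2 (hmem Pk j)) Pk.2
      have := prod_mem_levelSet Finset.univ (fun j : Fin (α Pk) => (p Pk j) ^ Pk.2)
        (fun _ => Pk.2) (fun j _ => h1 j)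
      simpa [Finset.sum_const, mul_comm] using this
    have h2 := prod_mem_levelSet α.support _ _ this
    rwa [← sigmaPat, hσ] at h2
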